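/- Let U be a WSTS over a finite alphabet Σ whose state order (S, ≤) is an ω²-WQO, i.e., the set of downward-closed subsets of S ordered by inclusion is a WQO. Then there exists a deterministic WSTS V over Σ with L(V) = L(U). -/

import Mathlib

/-- A labeled transition system whose states carry a compatible quasi order
(an upward-compatible LTS, ULTS): the final states are upward closed and the
quasi order is a simulation relation. -/
structure ULTS (A : Type) : Type 1 where
  S : Type
  le : S → S → Prop
  le_refl : ∀ s, le s s
  le_trans : ∀ ⦃s t u⦄, le s t → le t u → le s u
  init : Set S
  tr : S → A → Set S
  final : Set S
  final_up : ∀ ⦃s t⦄, s ∈ final → le s t → t ∈ final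
  sim : ∀ ⦃s t⦄ (a : A) ⦃s'⦄, le s t → s' ∈ tr s a → ∃ t', t' ∈ tr t a ∧ le s' t'

namespace ULTS

variable {A : Type}

/-- One-step successors of a set of states. -/
def stepSet (U : ULTS A) (P : Set U.S) (a : A) : Set U.S := ⋃ s ∈ P, U.tr s a

/-- States reachable from `P` by reading a word. -/
def reachSet (U : ULTS A) (P : Set U.S) : List A → Set U.S
  | [] => P
  | a :: w => U.reachSet (U.stepSet P a) w

/-- The language of a ULTS: words that can reach a final state from an initial state. -/
def lang (U : ULTS A) : Set (List A) := {w | (U.reachSet U.init w ∩ U.final).Nonempty}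

/-- The quasi order of the ULTS is a well quasi order; a ULTS with this property
is a (upward-compatible) WSTS. -/
def IsWQO (U : ULTS A) : Prop := ∀ f : ℕ → U.S, ∃ i j, i < j ∧ U.le (f i) (f j)

/-- A ULTS is deterministic if the set of initial states and every transition image
are singletons. -/
def Deterministic (U : ULTS A) : Prop :=
  (∃ s, U.init = {s}) ∧ ∀ s a, ∃ t, U.tr s a = {t}

end ULTS

/-- A language is regular if it is accepted by a deterministic finite automaton
with finitely many states. -/
def IsRegularLang {A : Type} (L : Set (List A)) : Prop :=
  ∃ (Q : Type) (_ : Fintype Q) (M : DFA A Q), M.accepts = L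

/-- Two languages are regularly separable if some regular language contains the
first and is disjoint from the second. -/
def RegSep {A : Type} (L1 L2 : Set (List A)) : Prop :=
  ∃ R : Set (List A), IsRegularLang R ∧ L1 ⊆ R ∧ R ∩ L2 = ∅


/-- A set of states is downward closed. -/
def ULTS.DownClosed {A : Type} (U : ULTS A) (X : Set U.S) : Prop :=
  ∀ ⦃s t⦄, U.le s t → t ∈ X → s ∈ X

/-- The state order is an ω²-WQO: the downward-closed subsets of the states,
ordered by inclusion, form a WQO. -/
def ULTS.IsOmegaSqWQO {A : Type} (U : ULTS A) : Prop :=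
  ∀ D : ℕ → {X : Set U.S // U.DownClosed X}, ∃ i j, i < j ∧ (D i).1 ⊆ (D j).1

namespace ULTS

variable {A : Type} (U : ULTS A)

/-- Downward closure of a set of states. -/
def cl (P : Set U.S) : Set U.S := {s | ∃ t ∈ P, U.le s t}

lemma subset_cl (P : Set U.S) : P ⊆ U.cl P := fun s hs => ⟨s, hs, U.le_refl s⟩

lemma cl_downClosed (P : Set U.S) : U.DownClosed (U.cl P) := by
  rintro s t hst ⟨u, hu, htu⟩
  exact ⟨u, hu, U.le_trans hst htu⟩

lemma cl_mono {P Q : Set U.S} (h : P ⊆ Q) : U.cl P ⊆ U.cl Q := by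
  rintro s ⟨t, ht, hst⟩; exact ⟨t, h ht, hst⟩

lemma stepSet_mono {P Q : Set U.S} (h : P ⊆ Q) (a : A) :
    U.stepSet P a ⊆ U.stepSet Q a := by
  intro s hs
  simp only [stepSet, Set.mem_iUnion] at hs ⊢
  obtain ⟨t, ht, hs⟩ := hs
  exact ⟨t, h ht, hs⟩

lemma cl_step_cl (P : Set U.S) (a : A) :
    U.cl (U.stepSet (U.cl P) a) = U.cl (U.stepSet P a) := by
  apply Set.Subset.antisymm
  · rintro s ⟨s', hs', hss'⟩
    simp only [stepSet, Set.mem_iUnion] at hs'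
    obtain ⟨t, ⟨u, hu, htu⟩, hs'⟩ := hs'
    obtain ⟨u', hu', hsu'⟩ := U.sim a htu hs'
    refine ⟨u', ?_, U.le_trans hss' hsu'⟩
    simp only [stepSet, Set.mem_iUnion]
    exact ⟨u, hu, hu'⟩
  · exact U.cl_mono (U.stepSet_mono (U.subset_cl P) a)

lemma cl_inter_final_nonempty (P : Set U.S) :
    (U.cl P ∩ U.final).Nonempty ↔ (P ∩ U.final).Nonempty := by
  constructor
  · rintro ⟨s, ⟨t, ht, hst⟩, hsf⟩
    exact ⟨t, ht, U.final_up hsf hst⟩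
  · rintro ⟨s, hs, hsf⟩
    exact ⟨s, U.subset_cl P hs, hsf⟩

/-- The deterministic powerset WSTS. -/
def detV : ULTS A where
  S := {X : Set U.S // U.DownClosed X}
  le X Y := X.1 ⊆ Y.1
  le_refl X := Set.Subset.refl _
  le_trans _ _ _ h h' := Set.Subset.trans h h'
  init := {⟨U.cl U.init, U.cl_downClosed _⟩}
  tr X a := {⟨U.cl (U.stepSet X.1 a), U.cl_downClosed _⟩}
  final := {X | (X.1 ∩ U.final).Nonempty}
  final_up := by
    rintro X Y ⟨s, hs, hsf⟩ hXY
    exact ⟨s, hXY hs, hsf⟩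
  sim := by
    rintro X Y a X' hXY rfl
    refine ⟨_, rfl, U.cl_mono (U.stepSet_mono hXY a)⟩

lemma detV_reach_singleton (X : (U.detV).S) (w : List A) :
    ∃ Y : (U.detV).S, (U.detV).reachSet {X} w = {Y} := by
  induction w generalizing X with
  | nil => exact ⟨X, rfl⟩
  | cons a w ih =>
    obtain ⟨Y, hY⟩ := ih ⟨U.cl (U.stepSet X.1 a), U.cl_downClosed _⟩
    refine ⟨Y, ?_⟩
    have hstep : (U.detV).stepSet {X} a =
        ({⟨U.cl (U.stepSet X.1 a), U.cl_downClosed _⟩} : Set (U.detV).S) := by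
      ext Z
      simp only [ULTS.stepSet, Set.mem_iUnion, Set.mem_singleton_iff]
      constructor
      · rintro ⟨s, rfl, h⟩
        exact h
      · rintro rfl
        exact ⟨X, rfl, rfl⟩
    show (U.detV).reachSet ((U.detV).stepSet {X} a) w = {Y}
    rw [hstep, hY]

lemma detV_reach_val (P : Set U.S) (w : List A) (hP : U.DownClosed (U.cl P))
    (Y : (U.detV).S) (hY : (U.detV).reachSet {⟨U.cl P, hP⟩} w = {Y}) :
    Y.1 = U.cl (U.reachSet P w) := by
  induction w generalizing P with
  | nil =>
    have : (⟨U.cl P, hP⟩ : (U.detV).S) = Y := by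
      have hmem : (⟨U.cl P, hP⟩ : (U.detV).S) ∈
          (U.detV).reachSet ({⟨U.cl P, hP⟩} : Set (U.detV).S) [] := rfl
      rw [hY] at hmem
      exact hmem
    simp [ULTS.reachSet, ← this]
  | cons a w ih =>
    have hstep : (U.detV).stepSet ({⟨U.cl P, hP⟩} : Set (U.detV).S) a =
        ({⟨U.cl (U.stepSet (U.cl P) a), U.cl_downClosed _⟩} : Set (U.detV).S) := by
      ext Z
      simp only [ULTS.stepSet, Set.mem_iUnion, Set.mem_singleton_iff]
      constructor
      · rintro ⟨s, rfl, h⟩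
        exact h
      · rintro rfl
        exact ⟨⟨U.cl P, hP⟩, rfl, rfl⟩
    have heq : @Eq (U.detV).S ⟨U.cl (U.stepSet (U.cl P) a), U.cl_downClosed _⟩
        ⟨U.cl (U.stepSet P a), U.cl_downClosed _⟩ := by
      exact Subtype.ext (U.cl_step_cl P a)
    have hY' : (U.detV).reachSet
        ({⟨U.cl (U.stepSet P a), U.cl_downClosed _⟩} : Set (U.detV).S) w = {Y} := by
      have : (U.detV).reachSet ((U.detV).stepSet ({⟨U.cl P, hP⟩} : Set (U.detV).S) a) w
          = {Y} := hY
      rwa [hstep, heq] at this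
    have := ih (U.stepSet P a) (U.cl_downClosed _) hY'
    simpa [ULTS.reachSet] using this

end ULTS

/-- Every WSTS over an ω²-WQO can be determinized: its language
is accepted by a deterministic WSTS. -/
theorem omegaSq_wsts_determinizable {A : Type} [Finite A]
    (U : ULTS A) (hwqo : U.IsWQO) (homega : U.IsOmegaSqWQO) :
    ∃ V : ULTS A, V.IsWQO ∧ V.Deterministic ∧ V.lang = U.lang := by
  refine ⟨U.detV, homega, ⟨⟨_, rfl⟩, fun s a => ⟨_, rfl⟩⟩, ?_⟩
  ext w
  simp only [ULTS.lang, Set.mem_setOf_eq]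
  obtain ⟨Y, hY⟩ := U.detV_reach_singleton ⟨U.cl U.init, U.cl_downClosed _⟩ w
  have hval := U.detV_reach_val U.init w (U.cl_downClosed _) Y hY
  have hinit : (U.detV).init = ({⟨U.cl U.init, U.cl_downClosed _⟩} : Set (U.detV).S) := rfl
  rw [hinit, hY]
  constructor
  · rintro ⟨X, hX, hXf⟩
    rw [Set.mem_singleton_iff] at hX
    subst hX
    have : (X.1 ∩ U.final).Nonempty := hXf
    rw [hval, U.cl_inter_final_nonempty] at this
    exact this
  · intro h
    refine ⟨Y, rfl, ?_⟩
    show (Y.1 ∩ U.final).Nonempty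
    rw [hval, U.cl_inter_final_nonempty]
    exact h
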